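/- Let a and b be independent random vectors in ℝ^M with E[b] = 0 and finite fourth moments E‖a‖⁴ < ∞ and E‖b‖⁴ < ∞. Then E‖a + b‖⁴ ≤ E‖a‖⁴ + 3·E‖b‖⁴ + 8·E[‖a‖²·‖b‖²]. -/

import Mathlib

open MeasureTheory ProbabilityTheory

private lemma coord_abs_le_norm {M : ℕ} (x : EuclideanSpace ℝ (Fin M)) (i : Fin M) :
    |x i| ≤ ‖x‖ := by
  rw [EuclideanSpace.norm_eq, ← Real.sqrt_sq_eq_abs]
  apply Real.sqrt_le_sqrt
  exact Finset.single_le_sum (f := fun j => ‖x j‖ ^ 2)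
    (fun j _ => by positivity) (Finset.mem_univ i) |>.trans_eq' (by simp [sq_abs])

private lemma cube_mul_le_fourth (A B : ℝ) (hA : 0 ≤ A) (hB : 0 ≤ B) :
    A ^ 3 * B ≤ A ^ 4 + B ^ 4 := by
  nlinarith [sq_nonneg (A ^ 2 - A * B), sq_nonneg (A ^ 2 - B ^ 2), sq_nonneg (A * B - B ^ 2),
    mul_nonneg hA hB, sq_nonneg A, sq_nonneg B]

/-- **Fourth-moment expansion inequality.**
If `a` and `b` are independent random vectors in `ℝ^M` with `E[b] = 0` and finite fourth
moments, then `E‖a + b‖⁴ ≤ E‖a‖⁴ + 3 E‖b‖⁴ + 8 E[‖a‖² ‖b‖²]`. -/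
theorem fourth_moment_sum_expansion
    {Ω : Type*} [MeasurableSpace Ω] (μ : Measure Ω) [IsProbabilityMeasure μ]
    {M : ℕ} (a b : Ω → EuclideanSpace ℝ (Fin M))
    (hameas : AEMeasurable a μ) (hbmeas : AEMeasurable b μ)
    (hindep : IndepFun a b μ)
    (hbmean : ∫ ω, b ω ∂μ = 0)
    (ha4 : MemLp a 4 μ) (hb4 : MemLp b 4 μ) :
    ∫ ω, ‖a ω + b ω‖ ^ 4 ∂μ
      ≤ (∫ ω, ‖a ω‖ ^ 4 ∂μ) + 3 * (∫ ω, ‖b ω‖ ^ 4 ∂μ)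
        + 8 * ∫ ω, ‖a ω‖ ^ 2 * ‖b ω‖ ^ 2 ∂μ := by
  have hasm : AEStronglyMeasurable a μ := hameas.aestronglyMeasurable
  have hbsm : AEStronglyMeasurable b μ := hbmeas.aestronglyMeasurable
  -- integrability of fourth powers of norms
  have iA4 : Integrable (fun ω => ‖a ω‖ ^ 4) μ := by
    have := ha4.integrable_norm_rpow (by norm_num) (by norm_num)
    simp only [ENNReal.toReal_ofNat] at this
    convert this using 2 with ω
    rw [← Real.rpow_natCast ‖a ω‖ 4]
    norm_num
  have iB4 : Integrable (fun ω => ‖b ω‖ ^ 4) μ := by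
    have := hb4.integrable_norm_rpow (by norm_num) (by norm_num)
    simp only [ENNReal.toReal_ofNat] at this
    convert this using 2 with ω
    rw [← Real.rpow_natCast ‖b ω‖ 4]
    norm_num
  have iG : Integrable (fun ω => ‖a ω‖ ^ 4 + ‖b ω‖ ^ 4) μ := iA4.add iB4
  -- dominating function: all the cross terms are bounded by ‖a‖⁴ + ‖b‖⁴
  have iA2B2 : Integrable (fun ω => ‖a ω‖ ^ 2 * ‖b ω‖ ^ 2) μ := by
    refine iG.mono' ((hasm.norm.pow 2).mul (hbsm.norm.pow 2)) (ae_of_all _ fun ω => ?_)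
    have h1 : (0:ℝ) ≤ ‖a ω‖ ^ 2 * ‖b ω‖ ^ 2 := by positivity
    rw [Real.norm_eq_abs, abs_of_nonneg h1]
    nlinarith [sq_nonneg (‖a ω‖ ^ 2 - ‖b ω‖ ^ 2)]
  have ipsm : AEStronglyMeasurable (fun ω => (inner ℝ (a ω) (b ω) : ℝ)) μ := hasm.inner hbsm
  have iA2ip : Integrable (fun ω => ‖a ω‖ ^ 2 * (inner ℝ (a ω) (b ω) : ℝ)) μ := by
    refine iG.mono' ((hasm.norm.pow 2).mul ipsm) (ae_of_all _ fun ω => ?_)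
    have h1 : |(inner ℝ (a ω) (b ω) : ℝ)| ≤ ‖a ω‖ * ‖b ω‖ := abs_real_inner_le_norm _ _
    have h2 : ‖a ω‖ ^ 3 * ‖b ω‖ ≤ ‖a ω‖ ^ 4 + ‖b ω‖ ^ 4 :=
      cube_mul_le_fourth _ _ (norm_nonneg _) (norm_nonneg _)
    rw [Real.norm_eq_abs, abs_mul, abs_of_nonneg (by positivity : (0:ℝ) ≤ ‖a ω‖ ^ 2)]
    nlinarith [sq_nonneg (‖a ω‖), norm_nonneg (a ω), norm_nonneg (b ω), abs_nonneg (inner ℝ (a ω) (b ω) : ℝ)]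
  -- coordinate functions
  have hai : ∀ i : Fin M, AEMeasurable (fun ω => a ω i) μ := fun i =>
    ((EuclideanSpace.proj (𝕜 := ℝ) i).continuous.measurable).comp_aemeasurable hameas
  have hbi : ∀ i : Fin M, AEMeasurable (fun ω => b ω i) μ := fun i =>
    ((EuclideanSpace.proj (𝕜 := ℝ) i).continuous.measurable).comp_aemeasurable hbmeas
  have iXY : ∀ i : Fin M,
      Integrable (fun ω => (‖a ω‖ ^ 2 * a ω i) * b ω i) μ := by
    intro i
    refine iG.mono' (((hasm.norm.pow 2).mul (hai i).aestronglyMeasurable).mul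
      (hbi i).aestronglyMeasurable) (ae_of_all _ fun ω => ?_)
    have h1 : |a ω i| ≤ ‖a ω‖ := coord_abs_le_norm _ i
    have h2 : |b ω i| ≤ ‖b ω‖ := coord_abs_le_norm _ i
    have h3 : ‖a ω‖ ^ 3 * ‖b ω‖ ≤ ‖a ω‖ ^ 4 + ‖b ω‖ ^ 4 :=
      cube_mul_le_fourth _ _ (norm_nonneg _) (norm_nonneg _)
    rw [Real.norm_eq_abs, abs_mul, abs_mul,
      abs_of_nonneg (by positivity : (0:ℝ) ≤ ‖a ω‖ ^ 2)]
    calc ‖a ω‖ ^ 2 * |a ω i| * |b ω i| ≤ (‖a ω‖ ^ 2 * ‖a ω‖) * ‖b ω‖ :=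
          mul_le_mul (mul_le_mul_of_nonneg_left h1 (sq_nonneg _)) h2 (abs_nonneg _)
            (by positivity)
      _ = ‖a ω‖ ^ 3 * ‖b ω‖ := by ring
      _ ≤ _ := h3
  -- the zero cross term
  have hzero : ∫ ω, ‖a ω‖ ^ 2 * (inner ℝ (a ω) (b ω) : ℝ) ∂μ = 0 := by
    have hb_int : Integrable b μ := hb4.integrable (by norm_num)
    have hrw : ∀ ω, ‖a ω‖ ^ 2 * (inner ℝ (a ω) (b ω) : ℝ)
        = ∑ i, (‖a ω‖ ^ 2 * a ω i) * b ω i := by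
      intro ω
      simp only [PiLp.inner_apply, RCLike.inner_apply, conj_trivial]
      rw [Finset.mul_sum]
      exact Finset.sum_congr rfl fun i _ => by ring
    simp_rw [hrw]
    rw [integral_finset_sum _ fun i _ => iXY i]
    refine Finset.sum_eq_zero fun i _ => ?_
    have hφ : Measurable fun x : EuclideanSpace ℝ (Fin M) => ‖x‖ ^ 2 * x i :=
      ((continuous_norm.pow 2).mul (EuclideanSpace.proj (𝕜 := ℝ) i).continuous).measurable
    have hψ : Measurable fun x : EuclideanSpace ℝ (Fin M) => x i :=
      (EuclideanSpace.proj (𝕜 := ℝ) i).continuous.measurable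
    have hind := (hindep.comp hφ hψ)
    have := IndepFun.integral_mul_eq_mul_integral (hindep.comp hφ hψ)
      (hφ.comp_aemeasurable hameas).aestronglyMeasurable
      (hψ.comp_aemeasurable hbmeas).aestronglyMeasurable
    have hbz : ∫ ω, b ω i ∂μ = 0 := by
      have h := (EuclideanSpace.proj (𝕜 := ℝ) i).integral_comp_comm hb_int
      rw [hbmean] at h
      simpa using h
    calc ∫ ω, (‖a ω‖ ^ 2 * a ω i) * b ω i ∂μ
        = (∫ ω, ‖a ω‖ ^ 2 * a ω i ∂μ) * ∫ ω, b ω i ∂μ := this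
      _ = 0 := by rw [hbz, mul_zero]
  -- pointwise inequality
  have hpt : ∀ ω, ‖a ω + b ω‖ ^ 4
      ≤ ‖a ω‖ ^ 4 + 3 * ‖b ω‖ ^ 4 + 8 * (‖a ω‖ ^ 2 * ‖b ω‖ ^ 2)
        + 4 * (‖a ω‖ ^ 2 * (inner ℝ (a ω) (b ω) : ℝ)) := by
    intro ω
    set x := a ω
    set y := b ω
    have hxy : ‖x + y‖ ^ 2 = ‖x‖ ^ 2 + 2 * (inner ℝ x y : ℝ) + ‖y‖ ^ 2 := norm_add_sq_real x y
    have habs := abs_le.mp (abs_real_inner_le_norm x y)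
    have h4 : ‖x + y‖ ^ 4 = (‖x + y‖ ^ 2) ^ 2 := by ring
    rw [h4, hxy]
    have h2 : (inner ℝ x y : ℝ) ^ 2 ≤ (‖x‖ * ‖y‖) ^ 2 := by
      nlinarith [habs.1, habs.2]
    have h3 : ‖y‖ ^ 2 * (inner ℝ x y : ℝ) ≤ ‖y‖ ^ 2 * (‖x‖ * ‖y‖) :=
      mul_le_mul_of_nonneg_left habs.2 (sq_nonneg _)
    nlinarith [mul_nonneg (sq_nonneg ‖y‖) (sq_nonneg (‖x‖ - ‖y‖)),
      norm_nonneg x, norm_nonneg y]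
  -- integrate
  have iRHS : Integrable (fun ω => ‖a ω‖ ^ 4 + 3 * ‖b ω‖ ^ 4 + 8 * (‖a ω‖ ^ 2 * ‖b ω‖ ^ 2)
      + 4 * (‖a ω‖ ^ 2 * (inner ℝ (a ω) (b ω) : ℝ))) μ :=
    ((iA4.add (iB4.const_mul 3)).add (iA2B2.const_mul 8)).add (iA2ip.const_mul 4)
  calc ∫ ω, ‖a ω + b ω‖ ^ 4 ∂μ
      ≤ ∫ ω, ‖a ω‖ ^ 4 + 3 * ‖b ω‖ ^ 4 + 8 * (‖a ω‖ ^ 2 * ‖b ω‖ ^ 2)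
          + 4 * (‖a ω‖ ^ 2 * (inner ℝ (a ω) (b ω) : ℝ)) ∂μ :=
        integral_mono_of_nonneg (ae_of_all _ fun ω => by positivity) iRHS
          (ae_of_all _ hpt)
    _ = (∫ ω, ‖a ω‖ ^ 4 ∂μ) + 3 * (∫ ω, ‖b ω‖ ^ 4 ∂μ)
          + 8 * (∫ ω, ‖a ω‖ ^ 2 * ‖b ω‖ ^ 2 ∂μ)
          + 4 * ∫ ω, ‖a ω‖ ^ 2 * (inner ℝ (a ω) (b ω) : ℝ) ∂μ := by
        have i1 : Integrable (fun ω => ‖a ω‖ ^ 4 + 3 * ‖b ω‖ ^ 4) μ :=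
          iA4.add (iB4.const_mul 3)
        have i2 : Integrable (fun ω => ‖a ω‖ ^ 4 + 3 * ‖b ω‖ ^ 4
            + 8 * (‖a ω‖ ^ 2 * ‖b ω‖ ^ 2)) μ := i1.add (iA2B2.const_mul 8)
        rw [integral_add i2 (iA2ip.const_mul 4), integral_add i1 (iA2B2.const_mul 8),
          integral_add iA4 (iB4.const_mul 3),
          integral_const_mul, integral_const_mul, integral_const_mul]
    _ = (∫ ω, ‖a ω‖ ^ 4 ∂μ) + 3 * (∫ ω, ‖b ω‖ ^ 4 ∂μ)
          + 8 * ∫ ω, ‖a ω‖ ^ 2 * ‖b ω‖ ^ 2 ∂μ := by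
        rw [hzero, mul_zero, add_zero]
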